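/- Let (S_X, S_Z) be a CSS stabilizer code on a finite type Q satisfying the duality, single-logical-qubit, intersection, and T-invariance assumptions, let α : Finset Q be NOT tolerable, and let ρ be an encoded state. Then there exists a logical X operator λ such that α Δ λ is tolerable, and for any such λ, setting w := U† X_λ U X_λ, one has (1/|S_X|) · Σ_{c ∈ S_X} X_c (U X_α ρ X_α U†) X_c = X_α ((1/|E_{α Δ λ}|) · Σ_{z ∈ E_{α Δ λ}} Z_z (U w ρ w† U†) Z_z) X_α. (Theorem 1, non-tolerable case: the propagated error additionally includes the encoded gate w = U₀† X U₀ X applied before U.) -/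

import Mathlib

open Finset
open scoped symmDiff Matrix

namespace CC

variable {Q : Type*} [Fintype Q] [DecidableEq Q]

/-- A subgroup of the abelian group `(Finset Q, ∆)`. -/
def IsSubgroup (S : Set (Finset Q)) : Prop :=
  ∅ ∈ S ∧ ∀ a ∈ S, ∀ b ∈ S, a ∆ b ∈ S

/-- The subgroup of `(Finset Q, ∆)` generated by a set. -/
def closure (T : Set (Finset Q)) : Set (Finset Q) :=
  ⋂₀ {S : Set (Finset Q) | IsSubgroup S ∧ T ⊆ S}

/-- A CSS stabilizer code on the qubits `Q`. -/
structure CSS (Q : Type*) [Fintype Q] [DecidableEq Q] where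
  SX : Set (Finset Q)
  SZ : Set (Finset Q)
  hSX : IsSubgroup SX
  hSZ : IsSubgroup SZ
  comm : ∀ a ∈ SZ, ∀ b ∈ SX, 2 ∣ (a ∩ b).card

def ZX (C : CSS Q) : Set (Finset Q) := {γ | ∀ f ∈ C.SZ, 2 ∣ (γ ∩ f).card}

def ZZ (C : CSS Q) : Set (Finset Q) := {z | ∀ c ∈ C.SX, 2 ∣ (z ∩ c).card}

/-- Duality assumption. -/
def Dual (C : CSS Q) : Prop :=
  C.SZ = {z | ∀ γ ∈ ZX C, 2 ∣ (z ∩ γ).card} ∧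
  C.SX = {c | ∀ z ∈ ZZ C, 2 ∣ (c ∩ z).card}

def LogicalX (C : CSS Q) (l : Finset Q) : Prop := l ∈ ZX C ∧ l ∉ C.SX

def LogicalZ (C : CSS Q) (l : Finset Q) : Prop := l ∈ ZZ C ∧ l ∉ C.SZ

/-- Single-logical-qubit assumption. -/
def SingleQubit (C : CSS Q) : Prop :=
  (ZX C ≠ C.SX ∧ ∀ l l', LogicalX C l → LogicalX C l' → l ∆ l' ∈ C.SX) ∧
  (ZZ C ≠ C.SZ ∧ ∀ l l', LogicalZ C l → LogicalZ C l' → l ∆ l' ∈ C.SZ)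

/-- Intersection axiom. -/
def Inter (C : CSS Q) : Prop :=
  ZZ C = {x | ∃ α ∈ ZX C, ∃ β ∈ ZX C, x = α ∩ β}

def G (C : CSS Q) (α : Finset Q) : Set (Finset Q) :=
  closure (C.SZ ∪ {x | ∃ β ∈ ZX C, x = α ∩ β})

def H (C : CSS Q) (α : Finset Q) : Set (Finset Q) :=
  closure (C.SZ ∪ {x | ∃ β ∈ C.SX, x = α ∩ β})

def Zof (K : Set (Finset Q)) : Set (Finset Q) := {γ | ∀ h ∈ K, 2 ∣ (γ ∩ h).card}

def Tolerable (C : CSS Q) (α : Finset Q) : Prop := ∀ z ∈ G C α, ¬ LogicalZ C z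

def g (b : Q → ℤ) (s : Finset Q) : ℤ := ∑ q ∈ s, b q

/-- T-invariance assumption. -/
def TInv (C : CSS Q) (b : Q → ℤ) : Prop :=
  (∀ β ∈ C.SX, (8 : ℤ) ∣ g b β) ∧
  (∀ β ∈ C.SX, ∀ γ ∈ ZX C, (8 : ℤ) ∣ (g b β - 2 * g b (γ ∩ β)))

def E (C : CSS Q) (b : Q → ℤ) (α : Finset Q) : Set (Finset Q) :=
  {z | ∀ γ ∈ Zof (G C α), g b (γ ∩ α) ≡ 2 * ((z ∩ γ).card : ℤ) [ZMOD 4]}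

/- Quantum setting -/

abbrev M (Q : Type*) [Fintype Q] [DecidableEq Q] :=
  Matrix (Q → ZMod 2) (Q → ZMod 2) ℂ

def supp (v : Q → ZMod 2) : Finset Q := Finset.univ.filter (fun q => v q = 1)

def ind (α : Finset Q) : Q → ZMod 2 := fun q => if q ∈ α then 1 else 0

def XM (α : Finset Q) : M Q :=
  Matrix.of fun u v => if u = v + ind α then (1 : ℂ) else 0

noncomputable def ZM (α : Finset Q) : M Q :=
  Matrix.diagonal fun v => (-1 : ℂ) ^ (supp v ∩ α).card

noncomputable def AM (b : Q → ℤ) (α : Finset Q) : M Q :=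
  Matrix.diagonal fun v => Complex.I ^ (g b (α ∩ supp v))

noncomputable def UM (b : Q → ℤ) : M Q :=
  Matrix.diagonal fun v => Complex.exp (Real.pi * Complex.I / 4) ^ (g b (supp v))

def Encoded (C : CSS Q) (ρ : M Q) : Prop :=
  ρ.trace = 1 ∧
  (∀ c ∈ C.SX, XM c * ρ = ρ ∧ ρ * XM c = ρ) ∧
  (∀ f ∈ C.SZ, ZM f * ρ = ρ ∧ ρ * ZM f = ρ)

instance : Std.Commutative (α := Finset Q) (· ∆ ·) := ⟨symmDiff_comm⟩
instance : Std.Associative (α := Finset Q) (· ∆ ·) := ⟨symmDiff_assoc⟩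

/-- Iterated symmetric difference over a finite index set. -/
def bigΔ {ι : Type*} (s : Finset ι) (f : ι → Finset Q) : Finset Q :=
  s.fold (· ∆ ·) ∅ f

set_option linter.unusedSectionVars false

/-! ### Parity machinery -/

lemma zmod2_add_self (x : ZMod 2) : x + x = 0 := by revert x; decide

lemma ind_inter (a c : Finset Q) (q : Q) : ind (a ∩ c) q = ind a q * ind c q := by
  by_cases ha : q ∈ a <;> by_cases hc : q ∈ c <;>
    simp [ind, ha, hc, Finset.mem_inter]

lemma ind_symmDiff (a c : Finset Q) (q : Q) : ind (a ∆ c) q = ind a q + ind c q := by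
  by_cases ha : q ∈ a <;> by_cases hc : q ∈ c <;>
    simp [ind, ha, hc, Finset.mem_symmDiff] <;> decide

lemma card_zmod2 (a : Finset Q) : ((a.card : ZMod 2)) = ∑ q, ind a q := by
  classical
  unfold ind
  rw [Finset.sum_ite_mem, Finset.univ_inter, Finset.sum_const]
  simp

lemma dvd2_iff (n : ℕ) : 2 ∣ n ↔ ((n : ZMod 2) = 0) :=
  (ZMod.natCast_eq_zero_iff n 2).symm

lemma pc_symmDiff (a c : Finset Q) :
    (((a ∆ c).card : ZMod 2)) = (a.card : ZMod 2) + (c.card : ZMod 2) := by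
  rw [card_zmod2, card_zmod2, card_zmod2, ← Finset.sum_add_distrib]
  exact Finset.sum_congr rfl fun q _ => ind_symmDiff a c q

lemma inter_symmDiff_left (a c d : Finset Q) : a ∩ (c ∆ d) = (a ∩ c) ∆ (a ∩ d) := by
  ext q
  simp only [Finset.mem_inter, Finset.mem_symmDiff]
  tauto

lemma inter_symmDiff_right (a c d : Finset Q) : (a ∆ c) ∩ d = (a ∩ d) ∆ (c ∩ d) := by
  ext q
  simp only [Finset.mem_inter, Finset.mem_symmDiff]
  tauto

lemma zmod2_nat_sub {m n : ℕ} (h : (m : ZMod 2) = (n : ZMod 2)) : (2:ℤ) ∣ (m : ℤ) - n := by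
  have h2 : m % 2 = n % 2 := (ZMod.natCast_eq_natCast_iff m n 2).1 h
  omega

lemma even_of_zmod2 {n : ℕ} (h : ((n : ZMod 2) = 0)) : 2 ∣ n := (dvd2_iff n).2 h
/-! ### card parity helpers -/

lemma even_inter_symmDiff_right {a c d : Finset Q} (h1 : 2 ∣ (a ∩ d).card)
    (h2 : 2 ∣ (c ∩ d).card) : 2 ∣ ((a ∆ c) ∩ d).card := by
  rw [dvd2_iff] at *
  rw [inter_symmDiff_right, pc_symmDiff, h1, h2, add_zero]

lemma even_inter_symmDiff_left {a c d : Finset Q} (h1 : 2 ∣ (d ∩ a).card)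
    (h2 : 2 ∣ (d ∩ c).card) : 2 ∣ (d ∩ (a ∆ c)).card := by
  rw [dvd2_iff] at *
  rw [inter_symmDiff_left, pc_symmDiff, h1, h2, add_zero]

/-! ### Subgroups, closure, Zof -/

lemma isSubgroup_Zof (S : Set (Finset Q)) : IsSubgroup (Zof S) := by
  refine ⟨fun h _ => by simp, fun a ha c hc h hh => ?_⟩
  exact even_inter_symmDiff_right (ha h hh) (hc h hh)

lemma Zof_antitone {S T : Set (Finset Q)} (h : S ⊆ T) : Zof T ⊆ Zof S :=
  fun γ hγ x hx => hγ x (h hx)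

lemma subset_Zof_Zof (S : Set (Finset Q)) : S ⊆ Zof (Zof S) := by
  intro a ha γ hγ
  rw [Finset.inter_comm]
  exact hγ a ha

lemma Zof_Zof_Zof (S : Set (Finset Q)) : Zof (Zof (Zof S)) = Zof S :=
  Set.Subset.antisymm (Zof_antitone (subset_Zof_Zof S)) (subset_Zof_Zof (Zof S))

lemma isSubgroup_closure (T : Set (Finset Q)) : IsSubgroup (closure T) := by
  constructor
  · intro S hS; exact hS.1.1
  · intro a ha c hc S hS; exact hS.1.2 a (ha S hS) c (hc S hS)

lemma subset_closure (T : Set (Finset Q)) : T ⊆ closure T := by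
  intro x hx S hS; exact hS.2 hx

lemma closure_min {T S : Set (Finset Q)} (hS : IsSubgroup S) (h : T ⊆ S) :
    closure T ⊆ S := fun x hx => hx S ⟨hS, h⟩

lemma Zof_closure (T : Set (Finset Q)) : Zof (closure T) = Zof T := by
  apply Set.Subset.antisymm (Zof_antitone (subset_closure T))
  intro γ hγ h hh
  have hsub : IsSubgroup {x : Finset Q | 2 ∣ (γ ∩ x).card} :=
    ⟨by simp, fun a ha c hc => even_inter_symmDiff_left ha hc⟩
  exact closure_min hsub hγ hh

/-! ### g lemmas -/

lemma g_symmDiff (b : Q → ℤ) (x y : Finset Q) :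
    g b (x ∆ y) = g b x + g b y - 2 * g b (x ∩ y) := by
  have h1 : x ∆ y = (x ∪ y) \ (x ∩ y) := by
    ext q; simp [Finset.mem_symmDiff, Finset.mem_union, Finset.mem_inter, Finset.mem_sdiff]; tauto
  have h2 : g b (x ∪ y) + g b (x ∩ y) = g b x + g b y := Finset.sum_union_inter
  have h3 : g b ((x ∪ y) \ (x ∩ y)) = g b (x ∪ y) - g b (x ∩ y) :=
    Finset.sum_sdiff_eq_sub (Finset.inter_subset_union)
  rw [h1, h3]; omega

lemma g_parity {b : Q → ℤ} (hb : ∀ q, Odd (b q)) (x : Finset Q) :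
    (2:ℤ) ∣ g b x - x.card := by
  have : g b x - x.card = ∑ q ∈ x, (b q - 1) := by
    rw [Finset.sum_sub_distrib]
    simp [g]
  rw [this]
  exact Finset.dvd_sum fun q _ => by
    obtain ⟨k, hk⟩ := hb q; omega

/-! ### CSS basics -/

variable {C : CSS Q}

lemma isSubgroup_ZX (C : CSS Q) : IsSubgroup (ZX C) := by
  refine ⟨fun f _ => by simp, fun a ha c hc f hf => ?_⟩
  exact even_inter_symmDiff_right (ha f hf) (hc f hf)

lemma isSubgroup_ZZ (C : CSS Q) : IsSubgroup (ZZ C) := by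
  refine ⟨fun f _ => by simp, fun a ha c hc f hf => ?_⟩
  exact even_inter_symmDiff_right (ha f hf) (hc f hf)

lemma SX_sub_ZX (C : CSS Q) : C.SX ⊆ ZX C := by
  intro c hc f hf
  rw [Finset.inter_comm]
  exact C.comm f hf c hc

lemma SZ_sub_ZZ (C : CSS Q) : C.SZ ⊆ ZZ C := by
  intro f hf c hc
  exact C.comm f hf c hc

lemma SZ_eq_Zof_ZX (hdual : Dual C) : C.SZ = Zof (ZX C) := hdual.1

lemma mem_G_iff {α x : Finset Q} :
    x ∈ G C α ↔ ∃ f ∈ C.SZ, ∃ β ∈ ZX C, x = f ∆ (α ∩ β) := by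
  constructor
  · intro hx
    have : x ∈ {y : Finset Q | ∃ f ∈ C.SZ, ∃ β ∈ ZX C, y = f ∆ (α ∩ β)} := by
      have hsub : IsSubgroup {y : Finset Q | ∃ f ∈ C.SZ, ∃ β ∈ ZX C, y = f ∆ (α ∩ β)} := by
        constructor
        · exact ⟨∅, C.hSZ.1, ∅, (isSubgroup_ZX C).1, by
            rw [Finset.inter_empty]; exact (symmDiff_self (∅ : Finset Q)).symm⟩
        · rintro a ⟨f, hf, β, hβ, rfl⟩ c ⟨f', hf', β', hβ', rfl⟩
          refine ⟨f ∆ f', C.hSZ.2 f hf f' hf', β ∆ β', (isSubgroup_ZX C).2 β hβ β' hβ', ?_⟩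
          rw [inter_symmDiff_left]
          exact symmDiff_symmDiff_symmDiff_comm f (α ∩ β) f' (α ∩ β')
      refine closure_min hsub ?_ hx
      rintro y (hy | ⟨β, hβ, rfl⟩)
      · exact ⟨y, hy, ∅, (isSubgroup_ZX C).1, by
          rw [Finset.inter_empty]; exact (symmDiff_bot y).symm⟩
      · exact ⟨∅, C.hSZ.1, β, hβ, (bot_symmDiff _).symm⟩
    exact this
  · rintro ⟨f, hf, β, hβ, rfl⟩
    exact (isSubgroup_closure _).2 f (subset_closure _ (Or.inl hf)) (α ∩ β)
      (subset_closure _ (Or.inr ⟨β, hβ, rfl⟩))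

lemma inter_mem_ZZ (hinter : Inter C) {a c : Finset Q} (ha : a ∈ ZX C) (hc : c ∈ ZX C) :
    a ∩ c ∈ ZZ C := by
  rw [hinter]; exact ⟨a, ha, c, hc, rfl⟩

lemma even_card_of_mem_SZ (hinter : Inter C) {f : Finset Q} (hf : f ∈ C.SZ) :
    2 ∣ f.card := by
  have hzz : f ∈ ZZ C := SZ_sub_ZZ C hf
  rw [hinter] at hzz
  obtain ⟨a, ha, c, hc, rfl⟩ := hzz
  have := ha (a ∩ c) hf
  rwa [← Finset.inter_assoc, Finset.inter_self] at this

lemma tinv_triple {b : Q → ℤ} (hb : ∀ q, Odd (b q)) (htinv : TInv C b) {c γ μ : Finset Q} (hc : c ∈ C.SX)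
    (hγ : γ ∈ ZX C) (hμ : μ ∈ ZX C) : 2 ∣ (γ ∩ μ ∩ c).card := by
  have h0 := htinv.1 c hc
  have h1 := htinv.2 c hc γ hγ
  have h2 := htinv.2 c hc μ hμ
  have h3 := htinv.2 c hc (γ ∆ μ) ((isSubgroup_ZX C).2 γ hγ μ hμ)
  have e1 : (γ ∆ μ) ∩ c = (γ ∩ c) ∆ (μ ∩ c) := inter_symmDiff_right γ μ c
  have e2 : g b ((γ ∩ c) ∆ (μ ∩ c)) = g b (γ ∩ c) + g b (μ ∩ c) - 2 * g b ((γ ∩ c) ∩ (μ ∩ c)) :=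
    g_symmDiff b _ _
  have e3 : (γ ∩ c) ∩ (μ ∩ c) = γ ∩ μ ∩ c := by
    ext q; simp only [Finset.mem_inter]; tauto
  have hp : (2:ℤ) ∣ g b (γ ∩ μ ∩ c) - (γ ∩ μ ∩ c).card := g_parity hb _
  rw [e1, e2, e3] at h3
  have : (2:ℤ) ∣ ((γ ∩ μ ∩ c).card : ℤ) := by omega
  exact_mod_cast this

lemma sx_inter_mem_SZ {b : Q → ℤ} (hb : ∀ q, Odd (b q)) (hdual : Dual C) (htinv : TInv C b) {c γ : Finset Q}
    (hc : c ∈ C.SX) (hγ : γ ∈ ZX C) : c ∩ γ ∈ C.SZ := by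
  rw [SZ_eq_Zof_ZX hdual]
  intro μ hμ
  have h := tinv_triple hb htinv hc hγ hμ
  have : c ∩ γ ∩ μ = γ ∩ μ ∩ c := by ext q; simp only [Finset.mem_inter]; tauto
  rwa [this]
/-! ### Logical operator lemmas -/

lemma exists_logicalX (hsingle : SingleQubit C) : ∃ l, LogicalX C l := by
  by_contra h
  push_neg at h
  exact hsingle.1.1 (Set.Subset.antisymm
    (fun γ hγ => by_contra fun hn => (h γ) ⟨hγ, hn⟩) (SX_sub_ZX C))

lemma exists_logicalZ (hsingle : SingleQubit C) : ∃ z, LogicalZ C z := by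
  by_contra h
  push_neg at h
  exact hsingle.2.1 (Set.Subset.antisymm
    (fun γ hγ => by_contra fun hn => (h γ) ⟨hγ, hn⟩) (SZ_sub_ZZ C))

lemma logicalZ_decomp {b : Q → ℤ} (hb : ∀ q, Odd (b q)) (hdual : Dual C)
    (hinter : Inter C) (htinv : TInv C b) {z : Finset Q} (hz : LogicalZ C z) :
    ∃ a, LogicalX C a ∧ ∃ c, LogicalX C c ∧ z = a ∩ c := by
  have hzz := hz.1
  rw [hinter] at hzz
  obtain ⟨a, ha, c, hc, rfl⟩ := hzz
  have hna : a ∉ C.SX := fun hax => hz.2 (sx_inter_mem_SZ hb hdual htinv hax hc)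
  have hnc : c ∉ C.SX := fun hcx => hz.2 (by
    have := sx_inter_mem_SZ hb hdual htinv hcx ha
    rwa [Finset.inter_comm] at this)
  exact ⟨a, ⟨ha, hna⟩, c, ⟨hc, hnc⟩, rfl⟩

lemma logicalZ_pair_odd (hdual : Dual C) (hsingle : SingleQubit C)
    {z l : Finset Q} (hz : LogicalZ C z) (hl : LogicalX C l) : ¬ 2 ∣ (z ∩ l).card := by
  have hz2 : z ∉ Zof (ZX C) := by rw [← SZ_eq_Zof_ZX hdual]; exact hz.2
  simp only [Zof, Set.mem_setOf_eq, not_forall] at hz2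
  obtain ⟨γ, hγ, hodd⟩ := hz2
  have hγn : γ ∉ C.SX := fun hγx => hodd (hz.1 γ hγx)
  have hsx : l ∆ γ ∈ C.SX := hsingle.1.2 l γ hl ⟨hγ, hγn⟩
  have heven : 2 ∣ (z ∩ (l ∆ γ)).card := hz.1 _ hsx
  intro hzl
  have : 2 ∣ (z ∩ ((l ∆ γ) ∆ l)).card := even_inter_symmDiff_left heven hzl
  have heq : (l ∆ γ) ∆ l = γ := by rw [symmDiff_comm, symmDiff_symmDiff_cancel_left]
  rw [heq] at this
  exact hodd this

lemma logicalZ_odd_card {b : Q → ℤ} (hb : ∀ q, Odd (b q)) (hdual : Dual C)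
    (hsingle : SingleQubit C) (hinter : Inter C) (htinv : TInv C b)
    {z : Finset Q} (hz : LogicalZ C z) : ¬ 2 ∣ z.card := by
  obtain ⟨a, ha, c, hc, rfl⟩ := logicalZ_decomp hb hdual hinter htinv hz
  have h := logicalZ_pair_odd hdual hsingle hz ha
  have heq : (a ∩ c) ∩ a = a ∩ c := by
    ext q; simp only [Finset.mem_inter]; tauto
  rwa [heq] at h

lemma inter_logicals_logicalZ {b : Q → ℤ} (hb : ∀ q, Odd (b q)) (hdual : Dual C)
    (hsingle : SingleQubit C) (hinter : Inter C) (htinv : TInv C b)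
    {a c : Finset Q} (ha : LogicalX C a) (hc : LogicalX C c) : LogicalZ C (a ∩ c) := by
  refine ⟨inter_mem_ZZ hinter ha.1 hc.1, ?_⟩
  obtain ⟨z₀, hz₀⟩ := exists_logicalZ hsingle
  obtain ⟨a₀, ha₀, c₀, hc₀, hz₀e⟩ := logicalZ_decomp hb hdual hinter htinv hz₀
  have hs1 : (a ∆ a₀) ∩ c ∈ C.SZ :=
    sx_inter_mem_SZ hb hdual htinv (hsingle.1.2 a a₀ ha ha₀) hc.1
  have hs2 : a₀ ∩ (c ∆ c₀) ∈ C.SZ := by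
    have := sx_inter_mem_SZ hb hdual htinv (hsingle.1.2 c c₀ hc hc₀) ha₀.1
    rwa [Finset.inter_comm] at this
  intro hmem
  apply hz₀.2
  have key : z₀ = ((a ∩ c) ∆ ((a ∆ a₀) ∩ c)) ∆ (a₀ ∩ (c ∆ c₀)) := by
    rw [inter_symmDiff_right, inter_symmDiff_left,
      symmDiff_symmDiff_cancel_left, symmDiff_symmDiff_cancel_left, hz₀e]
  rw [key]
  exact C.hSZ.2 _ (C.hSZ.2 _ hmem _ hs1) _ hs2

/-- An element of `ZZ` contained in a stabilizer `γ ∈ S_X` is in `S_Z`. -/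
lemma zz_subset_sx_mem_SZ {b : Q → ℤ} (hb : ∀ q, Odd (b q)) (hdual : Dual C)
    (hsingle : SingleQubit C) (hinter : Inter C) (htinv : TInv C b)
    {α γ : Finset Q} (hγ : γ ∈ C.SX) (hzz : α ∩ γ ∈ ZZ C) : α ∩ γ ∈ C.SZ := by
  by_contra hn
  have hlog : LogicalZ C (α ∩ γ) := ⟨hzz, hn⟩
  have hodd := logicalZ_odd_card hb hdual hsingle hinter htinv hlog
  have heven := hzz γ hγ
  rw [Finset.inter_assoc, Finset.inter_self] at heven
  exact hodd heven

/-! ### Part 1: any logical X fixes a non-tolerable error -/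

lemma tolerable_symmDiff_logical {b : Q → ℤ} (hb : ∀ q, Odd (b q)) (hdual : Dual C)
    (hsingle : SingleQubit C) (hinter : Inter C) (htinv : TInv C b)
    {α l : Finset Q} (hntol : ¬ Tolerable C α) (hl : LogicalX C l) :
    Tolerable C (α ∆ l) := by
  -- extract a witness from non-tolerability
  simp only [Tolerable, not_forall] at hntol
  obtain ⟨x₀, hx₀G, hx₀⟩ := hntol
  simp only [not_not] at hx₀
  rw [mem_G_iff] at hx₀G
  obtain ⟨f₀, hf₀, β₀, hβ₀, rfl⟩ := hx₀G
  have hαβ₀zz : α ∩ β₀ ∈ ZZ C := by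
    have := (isSubgroup_ZZ C).2 _ hx₀.1 _ (SZ_sub_ZZ C hf₀)
    rwa [symmDiff_comm, symmDiff_symmDiff_cancel_left] at this
  have hαβ₀ : α ∩ β₀ ∉ C.SZ := by
    intro h
    apply hx₀.2
    exact C.hSZ.2 _ hf₀ _ h
  have hβ₀log : LogicalX C β₀ := by
    refine ⟨hβ₀, fun hβx => hαβ₀ ?_⟩
    exact zz_subset_sx_mem_SZ hb hdual hsingle hinter htinv hβx hαβ₀zz
  -- now show tolerability of α ∆ l
  intro x hxG hxlog
  rw [mem_G_iff] at hxG
  obtain ⟨f, hf, β, hβ, rfl⟩ := hxG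
  have hsplit : (α ∆ l) ∩ β = (α ∩ β) ∆ (l ∩ β) := inter_symmDiff_right α l β
  have hlβzz : l ∩ β ∈ ZZ C := inter_mem_ZZ hinter hl.1 hβ
  have hαβzz : α ∩ β ∈ ZZ C := by
    have h1 : f ∆ ((α ∆ l) ∩ β) ∈ ZZ C := hxlog.1
    have h2 : (α ∆ l) ∩ β ∈ ZZ C := by
      have := (isSubgroup_ZZ C).2 _ h1 _ (SZ_sub_ZZ C hf)
      rwa [symmDiff_comm, symmDiff_symmDiff_cancel_left] at this
    rw [hsplit] at h2
    have := (isSubgroup_ZZ C).2 _ h2 _ hlβzz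
    rwa [symmDiff_symmDiff_cancel_right] at this
  -- case on whether β is logical
  by_cases hβx : β ∈ C.SX
  · -- then both pieces are stabilizers, so x ∈ SZ: contradiction
    apply hxlog.2
    have h1 : α ∩ β ∈ C.SZ := zz_subset_sx_mem_SZ hb hdual hsingle hinter htinv hβx hαβzz
    have h2 : l ∩ β ∈ C.SZ := by
      have := sx_inter_mem_SZ hb hdual htinv hβx hl.1
      rwa [Finset.inter_comm] at this
    rw [hsplit]
    exact C.hSZ.2 _ hf _ (C.hSZ.2 _ h1 _ h2)
  · -- β is logical: both α∩β and l∩β are logical Z, so their symmDiff is in SZ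
    have hβlog : LogicalX C β := ⟨hβ, hβx⟩
    have hαβlog : LogicalZ C (α ∩ β) := by
      refine ⟨hαβzz, fun hmem => ?_⟩
      -- α∩β ≡ α∩β₀ modulo SZ
      have hββ₀ : β ∆ β₀ ∈ C.SX := hsingle.1.2 β β₀ hβlog hβ₀log
      have hmix : α ∩ (β ∆ β₀) ∈ C.SZ := by
        apply zz_subset_sx_mem_SZ hb hdual hsingle hinter htinv hββ₀
        rw [inter_symmDiff_left]
        exact (isSubgroup_ZZ C).2 _ hαβzz _ hαβ₀zz
      apply hαβ₀
      have key : α ∩ β₀ = (α ∩ β) ∆ (α ∩ (β ∆ β₀)) := by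
        rw [inter_symmDiff_left, symmDiff_symmDiff_cancel_left]
      rw [key]
      exact C.hSZ.2 _ hmem _ hmix
    have hlβlog : LogicalZ C (l ∩ β) :=
      inter_logicals_logicalZ hb hdual hsingle hinter htinv hl hβlog
    apply hxlog.2
    have : (α ∩ β) ∆ (l ∩ β) ∈ C.SZ := hsingle.2.2 _ _ hαβlog hlβlog
    rw [hsplit]
    exact C.hSZ.2 _ hf _ this
/-! ### Character sums -/

lemma neg_one_pow_zmod2 {m n : ℕ} (h : (m : ZMod 2) = (n : ZMod 2)) :
    ((-1 : ℂ)) ^ m = (-1 : ℂ) ^ n := by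
  have h2 : m % 2 = n % 2 := (ZMod.natCast_eq_natCast_iff' m n 2).1 h
  rcases Nat.even_or_odd m with he | ho
  · have : Even n := by rw [Nat.even_iff] at *; omega
    rw [he.neg_one_pow, this.neg_one_pow]
  · have : Odd n := by rw [Nat.odd_iff] at *; omega
    rw [ho.neg_one_pow, this.neg_one_pow]

open Classical in
lemma char_sum {S : Set (Finset Q)} (hS : IsSubgroup S) (e : Finset Q) :
    ∑ c ∈ (Set.toFinite S).toFinset, ((-1 : ℂ)) ^ ((e ∩ c).card)
      = if ∀ c ∈ S, 2 ∣ (e ∩ c).card then ((Set.toFinite S).toFinset.card : ℂ) else 0 := by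
  split_ifs with h
  · have hone : ∀ c ∈ (Set.toFinite S).toFinset, ((-1:ℂ)) ^ ((e ∩ c).card) = 1 := by
      intro c hc
      have h2 : Even ((e ∩ c).card) :=
        (even_iff_two_dvd).2 (h c ((Set.toFinite S).mem_toFinset.1 hc))
      exact h2.neg_one_pow
    rw [Finset.sum_congr rfl hone, Finset.sum_const, nsmul_eq_mul, mul_one]
  · push_neg at h
    obtain ⟨c₀, hc₀, hodd⟩ := h
    have hmem : ∀ c : Finset Q, c ∈ (Set.toFinite S).toFinset ↔
        c₀ ∆ c ∈ (Set.toFinite S).toFinset := by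
      intro c
      rw [Set.Finite.mem_toFinset, Set.Finite.mem_toFinset]
      constructor
      · intro hc; exact hS.2 c₀ hc₀ c hc
      · intro hc
        have := hS.2 c₀ hc₀ _ hc
        rwa [symmDiff_symmDiff_cancel_left] at this
    have key : ∑ c ∈ (Set.toFinite S).toFinset, ((-1 : ℂ)) ^ ((e ∩ (c₀ ∆ c)).card)
        = ∑ c ∈ (Set.toFinite S).toFinset, ((-1 : ℂ)) ^ ((e ∩ c).card) := by
      refine Finset.sum_equiv ⟨fun c => c₀ ∆ c, fun c => c₀ ∆ c,
        fun c => symmDiff_symmDiff_cancel_left c₀ c,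
        fun c => symmDiff_symmDiff_cancel_left c₀ c⟩ (fun c => hmem c) (fun c _ => rfl)
    have term : ∀ c : Finset Q, ((-1 : ℂ)) ^ ((e ∩ (c₀ ∆ c)).card)
        = -((-1 : ℂ)) ^ ((e ∩ c).card) := by
      intro c
      have hp : (((e ∩ (c₀ ∆ c)).card : ZMod 2)) = (((e ∩ c₀).card + (e ∩ c).card : ℕ) : ZMod 2) := by
        rw [inter_symmDiff_left, pc_symmDiff]; push_cast; ring
      rw [neg_one_pow_zmod2 hp, pow_add]
      have : ((-1 : ℂ)) ^ ((e ∩ c₀).card) = -1 :=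
        Odd.neg_one_pow (Nat.odd_iff.2 (by omega))
      rw [this]; ring
    rw [Finset.sum_congr rfl (fun c _ => term c)] at key
    rw [Finset.sum_neg_distrib] at key
    have : ∑ c ∈ (Set.toFinite S).toFinset, ((-1 : ℂ)) ^ ((e ∩ c).card) = 0 := by
      have h2 := key
      linear_combination (-1/2 : ℂ) * h2
    exact this

/-! ### Structure of E and Zof (G) -/

lemma mem_Zof_G {α' γ : Finset Q} (hdual : Dual C) (hγ : γ ∈ Zof (G C α')) :
    γ ∈ ZX C ∧ γ ∩ α' ∈ C.SZ := by
  rw [G, Zof_closure] at hγ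
  constructor
  · intro f hf; exact hγ f (Or.inl hf)
  · rw [SZ_eq_Zof_ZX hdual]
    intro μ hμ
    have := hγ (α' ∩ μ) (Or.inr ⟨μ, hμ, rfl⟩)
    rwa [← Finset.inter_assoc] at this

lemma mem_Zof_G_iff {α' d : Finset Q} (hdual : Dual C) (hd : d ∈ ZX C) :
    d ∈ Zof (G C α') ↔ d ∩ α' ∈ C.SZ := by
  constructor
  · exact fun h => (mem_Zof_G hdual h).2
  · intro hSZ
    rw [G, Zof_closure]
    rintro x (hx | ⟨β, hβ, rfl⟩)
    · exact hd x hx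
    · rw [← Finset.inter_assoc]
      rw [SZ_eq_Zof_ZX hdual] at hSZ
      have := hSZ β hβ  -- 2 ∣ ((d∩α') ∩ β).card
      exact this

lemma modeq4_two_mul {a c : ℕ} (h : ((a : ZMod 2)) = (c : ZMod 2)) :
    (2 * a : ℤ) ≡ 2 * c [ZMOD 4] := by
  have := zmod2_nat_sub h
  rw [Int.modEq_iff_dvd]
  omega

lemma E_eq_image {b : Q → ℤ} {α' z₀ : Finset Q} (hz₀ : z₀ ∈ E C b α') :
    E C b α' = (fun w => z₀ ∆ w) '' (Zof (Zof (G C α'))) := by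
  ext z
  constructor
  · intro hz
    refine ⟨z₀ ∆ z, ?_, by simpa using symmDiff_symmDiff_cancel_left z₀ z⟩
    intro γ hγ
    have h1 := hz₀ γ hγ
    have h2 := hz γ hγ
    have h3 : (2 * ((z₀ ∩ γ).card : ℤ)) ≡ 2 * ((z ∩ γ).card : ℤ) [ZMOD 4] :=
      (h1.symm.trans h2)
    rw [Int.modEq_iff_dvd] at h3
    rw [dvd2_iff, inter_symmDiff_right, pc_symmDiff]
    have : ((z₀ ∩ γ).card : ZMod 2) = ((z ∩ γ).card : ZMod 2) := by
      have h4 : (2:ℤ) ∣ ((z₀ ∩ γ).card : ℤ) - ((z ∩ γ).card : ℤ) := by omega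
      have h5 : ((z₀ ∩ γ).card : ℕ) % 2 = ((z ∩ γ).card : ℕ) % 2 := by omega
      rw [ZMod.natCast_eq_natCast_iff']; exact h5
    rw [this, zmod2_add_self]
  · rintro ⟨w, hw, rfl⟩
    intro γ hγ
    have h1 := hz₀ γ hγ
    have h2 : 2 ∣ (w ∩ γ).card := hw γ hγ
    have hpar : (((z₀ ∆ w) ∩ γ).card : ZMod 2) = ((z₀ ∩ γ).card : ZMod 2) := by
      rw [inter_symmDiff_right, pc_symmDiff, (dvd2_iff _).1 h2, add_zero]
    exact h1.trans (modeq4_two_mul hpar.symm)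
/-! ### supp / ind lemmas -/

lemma supp_add (u v : Q → ZMod 2) : supp (u + v) = supp u ∆ supp v := by
  ext q
  have hcase : ∀ x y : ZMod 2, (x + y = 1 ↔ ((x = 1 ∧ ¬ y = 1) ∨ (y = 1 ∧ ¬ x = 1))) := by
    decide
  simp only [supp, Finset.mem_symmDiff, Finset.mem_filter, Finset.mem_univ, true_and,
    Pi.add_apply]
  exact hcase (u q) (v q)

lemma supp_zero : supp (0 : Q → ZMod 2) = ∅ := by
  ext q; simp [supp]

lemma supp_ind (a : Finset Q) : supp (ind a) = a := by
  ext q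
  by_cases h : q ∈ a <;> simp [supp, ind, h]

lemma supp_add_ind (v : Q → ZMod 2) (a : Finset Q) : supp (v + ind a) = supp v ∆ a := by
  rw [supp_add, supp_ind]

lemma add_ind_add_ind (v : Q → ZMod 2) (a : Finset Q) : v + ind a + ind a = v := by
  funext q
  simp only [Pi.add_apply]
  have : ∀ x y : ZMod 2, x + y + y = x := by decide
  exact this (v q) (ind a q)

/-! ### Nonemptiness of E -/

lemma even_g_of_Zof_G {b : Q → ℤ} (hb : ∀ q, Odd (b q)) (hdual : Dual C) (hinter : Inter C)
    {α' γ : Finset Q} (hγ : γ ∈ Zof (G C α')) : (2:ℤ) ∣ g b (γ ∩ α') := by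
  have hSZ := (mem_Zof_G hdual hγ).2
  have hcard := even_card_of_mem_SZ hinter hSZ
  have hpar := g_parity hb (γ ∩ α')
  omega

lemma E_nonempty {b : Q → ℤ} (hb : ∀ q, Odd (b q)) (hdual : Dual C) (hinter : Inter C)
    (α' : Finset Q) : ∃ z₀, z₀ ∈ E C b α' := by
  classical
  -- the subspace of (Q → ZMod 2) corresponding to Zof (G C α')
  let W : Submodule (ZMod 2) (Q → ZMod 2) :=
    { carrier := {v | supp v ∈ Zof (G C α')}
      add_mem' := by
        intro x y hx hy
        simp only [Set.mem_setOf_eq] at hx hy ⊢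
        rw [supp_add]
        exact (isSubgroup_Zof _).2 _ hx _ hy
      zero_mem' := by
        simp only [Set.mem_setOf_eq]
        rw [supp_zero]
        exact (isSubgroup_Zof _).1
      smul_mem' := by
        intro c x hx
        have hc : c = 0 ∨ c = 1 := by revert c; decide
        rcases hc with rfl | rfl
        · rw [zero_smul]
          simp only [Set.mem_setOf_eq]
          rw [supp_zero]
          exact (isSubgroup_Zof _).1
        · rwa [one_smul] }
  let m : Finset Q → ℤ := fun γ => g b (γ ∩ α') / 2
  have hm : ∀ γ ∈ Zof (G C α'), 2 * m γ = g b (γ ∩ α') := by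
    intro γ hγ
    exact Int.mul_ediv_cancel' (even_g_of_Zof_G hb hdual hinter hγ)
  have hW : ∀ w : W, supp (w : Q → ZMod 2) ∈ Zof (G C α') := fun w => w.2
  -- χ is linear on W
  have hadd : ∀ γ δ : Finset Q, γ ∈ Zof (G C α') → δ ∈ Zof (G C α') →
      ((m (γ ∆ δ) : ℤ) : ZMod 2) = ((m γ : ℤ) : ZMod 2) + ((m δ : ℤ) : ZMod 2) := by
    intro γ δ hγ hδ
    have hγδ : γ ∆ δ ∈ Zof (G C α') := (isSubgroup_Zof _).2 _ hγ _ hδ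
    have e1 : (γ ∆ δ) ∩ α' = (γ ∩ α') ∆ (δ ∩ α') := inter_symmDiff_right γ δ α'
    have e2 : g b ((γ ∩ α') ∆ (δ ∩ α')) =
        g b (γ ∩ α') + g b (δ ∩ α') - 2 * g b ((γ ∩ α') ∩ (δ ∩ α')) := g_symmDiff b _ _
    -- the cross term is even
    have hδZX : δ ∈ ZX C := (mem_Zof_G hdual hδ).1
    have hγSZ : γ ∩ α' ∈ C.SZ := (mem_Zof_G hdual hγ).2
    have hcross_card : 2 ∣ ((γ ∩ α') ∩ (δ ∩ α')).card := by
      have h1 := hδZX _ hγSZ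
      have heq : (γ ∩ α') ∩ (δ ∩ α') = δ ∩ (γ ∩ α') := by
        ext q; simp only [Finset.mem_inter]; tauto
      rw [heq, Finset.inter_comm]
      rwa [Finset.inter_comm] at h1
    have hcross : (2:ℤ) ∣ g b ((γ ∩ α') ∩ (δ ∩ α')) := by
      have := g_parity hb ((γ ∩ α') ∩ (δ ∩ α'))
      omega
    have key : (2:ℤ) ∣ m (γ ∆ δ) - m γ - m δ := by
      have h1 := hm _ hγδ
      have h2 := hm _ hγ
      have h3 := hm _ hδ
      rw [e1, e2] at h1
      omega
    have : ((m (γ ∆ δ) - m γ - m δ : ℤ) : ZMod 2) = 0 :=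
      (ZMod.intCast_zmod_eq_zero_iff_dvd _ 2).2 key
    push_cast at this
    linear_combination this
  let χ : W →ₗ[ZMod 2] ZMod 2 :=
    { toFun := fun w => ((m (supp (w : Q → ZMod 2)) : ℤ) : ZMod 2)
      map_add' := by
        intro w w'
        show ((m (supp ((w : Q → ZMod 2) + (w' : Q → ZMod 2))) : ℤ) : ZMod 2) = _
        rw [supp_add]
        exact hadd _ _ (hW w) (hW w')
      map_smul' := by
        intro c w
        have hc : c = 0 ∨ c = 1 := by revert c; decide
        rcases hc with rfl | rfl
        · show ((m (supp ((0 : ZMod 2) • (w : Q → ZMod 2))) : ℤ) : ZMod 2) = _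
          rw [zero_smul, supp_zero]
          simp [m, g]
        · show ((m (supp ((1 : ZMod 2) • (w : Q → ZMod 2))) : ℤ) : ZMod 2) = _
          rw [one_smul]
          simp }
  -- extend χ to the whole space using a complement
  obtain ⟨W', hWW'⟩ := Submodule.exists_isCompl W
  let φ : (Q → ZMod 2) →ₗ[ZMod 2] ZMod 2 :=
    χ.comp (Submodule.projectionOnto W W' hWW')
  have hφW : ∀ w : W, φ (w : Q → ZMod 2) = χ w := by
    intro w
    show χ (Submodule.projectionOnto W W' hWW' w) = χ w
    rw [Submodule.projectionOnto_apply_left]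
  -- φ is represented by a vector z₀
  set z₀ : Finset Q := Finset.univ.filter (fun q => φ (Pi.single q 1) = 1) with hz₀def
  have hrep : ∀ v : Q → ZMod 2, φ v = ∑ q, v q * φ (Pi.single q 1) := by
    intro v
    conv_lhs => rw [pi_eq_sum_univ v]
    rw [map_sum]
    refine Finset.sum_congr rfl fun q _ => ?_
    rw [map_smul, smul_eq_mul]
    congr 1
    congr 1
    funext j
    simp [Pi.single_apply, eq_comm]
  have hpair : ∀ γ : Finset Q, ((z₀ ∩ γ).card : ZMod 2) = φ (ind γ) := by
    intro γ
    rw [card_zmod2, hrep (ind γ)]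
    refine Finset.sum_congr rfl fun q _ => ?_
    rw [ind_inter]
    have hz : ind z₀ q = φ (Pi.single q 1) := by
      by_cases h : φ (Pi.single q 1) = 1
      · simp [ind, hz₀def, h]
      · have h0 : φ (Pi.single q 1) = 0 := by
          have : ∀ x : ZMod 2, x ≠ 1 → x = 0 := by decide
          exact this _ h
        simp [ind, hz₀def, h, h0]
    rw [hz, mul_comm]
  refine ⟨z₀, ?_⟩
  intro γ hγ
  have hγW : ind γ ∈ W := by
    show supp (ind γ) ∈ Zof (G C α')
    rwa [supp_ind]
  have hφγ : φ (ind γ) = ((m γ : ℤ) : ZMod 2) := by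
    have := hφW ⟨ind γ, hγW⟩
    rw [this]
    show ((m (supp (ind γ)) : ℤ) : ZMod 2) = _
    rw [supp_ind]
  have hz₀γ : ((z₀ ∩ γ).card : ZMod 2) = ((m γ : ℤ) : ZMod 2) := by
    rw [hpair, hφγ]
  -- convert to the mod-4 statement
  have hdvd : (2:ℤ) ∣ m γ - ((z₀ ∩ γ).card : ℤ) := by
    have : ((m γ - ((z₀ ∩ γ).card : ℤ) : ℤ) : ZMod 2) = 0 := by
      push_cast
      rw [← hz₀γ]
      push_cast
      ring
    exact (ZMod.intCast_zmod_eq_zero_iff_dvd _ 2).1 this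
  have h2m := hm γ hγ
  rw [Int.modEq_iff_dvd]
  omega
/-! ### ζ machinery -/

noncomputable def ζ : ℂ := Complex.exp (Real.pi * Complex.I / 4)

lemma ζ_ne : (ζ : ℂ) ≠ 0 := Complex.exp_ne_zero _

lemma ζ_pow8 : (ζ : ℂ) ^ (8 : ℕ) = 1 := by
  rw [ζ, ← Complex.exp_nat_mul]
  have : ((8 : ℕ) : ℂ) * (Real.pi * Complex.I / 4) = 2 * Real.pi * Complex.I := by
    push_cast; ring
  rw [this, Complex.exp_two_pi_mul_I]

lemma ζ_zpow4 : (ζ : ℂ) ^ (4 : ℤ) = -1 := by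
  have : (ζ : ℂ) ^ (4 : ℤ) = ζ ^ (4 : ℕ) := by norm_cast
  rw [this, ζ, ← Complex.exp_nat_mul]
  have : ((4 : ℕ) : ℂ) * (Real.pi * Complex.I / 4) = Real.pi * Complex.I := by
    push_cast; ring
  rw [this, Complex.exp_pi_mul_I]

lemma ζ_zpow_congr {a c : ℤ} (h : a ≡ c [ZMOD 8]) : (ζ : ℂ) ^ a = ζ ^ c := by
  obtain ⟨k, hk⟩ := (Int.modEq_iff_dvd.1 h)
  have ha : a = c + 8 * (-k) := by omega
  rw [ha, zpow_add₀ ζ_ne, zpow_mul,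
    show ((8:ℤ)) = ((8:ℕ) : ℤ) from rfl, zpow_natCast, ζ_pow8, one_zpow, mul_one]

lemma ζ_zpow_add (a c : ℤ) : (ζ : ℂ) ^ (a + c) = ζ ^ a * ζ ^ c := zpow_add₀ ζ_ne a c

lemma ζ_star : (starRingEnd ℂ) (ζ : ℂ) = ζ⁻¹ := by
  rw [ζ, ← Complex.exp_conj, ← Complex.exp_neg]
  congr 1
  rw [map_div₀, map_mul, Complex.conj_I, Complex.conj_ofReal, map_ofNat]
  ring

lemma ζ_conj (n : ℤ) : (starRingEnd ℂ) ((ζ : ℂ) ^ n) = ζ ^ (-n) := by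
  rw [map_zpow₀, ζ_star, inv_zpow, ← zpow_neg]

lemma ζ_zpow_four_mul_card (n : ℕ) : (ζ : ℂ) ^ ((4 : ℤ) * n) = ((-1 : ℂ)) ^ n := by
  rw [zpow_mul, ζ_zpow4, zpow_natCast]

/-! ### Step A : per-term congruence -/

lemma stepA_term {b : Q → ℤ} (hb : ∀ q, Odd (b q)) (htinv : TInv C b)
    {s t α c : Finset Q} (hs : s ∈ ZX C) (ht : t ∈ ZX C) (hc : c ∈ C.SX) :
    (ζ : ℂ) ^ (g b ((s ∆ α) ∆ c) - g b ((t ∆ α) ∆ c))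
      = ζ ^ (g b (s ∆ α) - g b (t ∆ α)) * ((-1 : ℂ)) ^ (((s ∆ t) ∩ α ∩ c).card) := by
  have e1 : g b ((s ∆ α) ∆ c) = g b (s ∆ α) + g b c - 2 * g b ((s ∆ α) ∩ c) := g_symmDiff b _ _
  have e1' : g b ((t ∆ α) ∆ c) = g b (t ∆ α) + g b c - 2 * g b ((t ∆ α) ∩ c) := g_symmDiff b _ _
  have d2 : (s ∆ α) ∩ c = (s ∩ c) ∆ (α ∩ c) := inter_symmDiff_right s α c
  have d2' : (t ∆ α) ∩ c = (t ∩ c) ∆ (α ∩ c) := inter_symmDiff_right t α c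
  have e2 : g b ((s ∩ c) ∆ (α ∩ c)) = g b (s ∩ c) + g b (α ∩ c) - 2 * g b ((s ∩ c) ∩ (α ∩ c)) :=
    g_symmDiff b _ _
  have e2' : g b ((t ∩ c) ∆ (α ∩ c)) = g b (t ∩ c) + g b (α ∩ c) - 2 * g b ((t ∩ c) ∩ (α ∩ c)) :=
    g_symmDiff b _ _
  have i1 : (s ∩ c) ∩ (α ∩ c) = (s ∩ α) ∩ c := by
    ext q; simp only [Finset.mem_inter]; tauto
  have i1' : (t ∩ c) ∩ (α ∩ c) = (t ∩ α) ∩ c := by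
    ext q; simp only [Finset.mem_inter]; tauto
  have h2 : (8:ℤ) ∣ g b c - 2 * g b (s ∩ c) := htinv.2 c hc s hs
  have h2' : (8:ℤ) ∣ g b c - 2 * g b (t ∩ c) := htinv.2 c hc t ht
  have p1 : (2:ℤ) ∣ g b ((s ∩ α) ∩ c) - ((s ∩ α) ∩ c).card := g_parity hb _
  have p1' : (2:ℤ) ∣ g b ((t ∩ α) ∩ c) - ((t ∩ α) ∩ c).card := g_parity hb _
  have pd : (2:ℤ) ∣ (((s ∆ t) ∩ α ∩ c).card : ℤ)
      - ((s ∩ α) ∩ c).card - ((t ∩ α) ∩ c).card := by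
    have hz : (((s ∆ t) ∩ α ∩ c).card : ZMod 2)
        = ((((s ∩ α) ∩ c).card + ((t ∩ α) ∩ c).card : ℕ) : ZMod 2) := by
      have heq : (s ∆ t) ∩ α ∩ c = ((s ∩ α) ∩ c) ∆ ((t ∩ α) ∩ c) := by
        rw [inter_symmDiff_right, inter_symmDiff_right]
      rw [heq, pc_symmDiff]; push_cast; ring
    have := zmod2_nat_sub hz
    push_cast at this ⊢
    omega
  have hcong : g b ((s ∆ α) ∆ c) - g b ((t ∆ α) ∆ c)
      ≡ g b (s ∆ α) - g b (t ∆ α) + 4 * (((s ∆ t) ∩ α ∩ c).card : ℤ) [ZMOD 8] := by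
    rw [Int.modEq_iff_dvd]
    rw [e1, e1', d2, d2', e2, e2', i1, i1']
    omega
  rw [ζ_zpow_congr hcong, ζ_zpow_add, ζ_zpow_four_mul_card]
/-! ### Step D : indicator equivalence -/

lemma stepD (hinter : Inter C) {α l d : Finset Q} (hl : LogicalX C l) (hd : d ∈ ZX C)
    (htol : Tolerable C (α ∆ l)) : d ∩ α ∈ ZZ C ↔ d ∩ (α ∆ l) ∈ C.SZ := by
  have hdl : d ∩ l ∈ ZZ C := inter_mem_ZZ hinter hd hl.1
  have hsplit : d ∩ (α ∆ l) = (d ∩ α) ∆ (d ∩ l) := inter_symmDiff_left d α l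
  constructor
  · intro hzz
    have hmem : d ∩ (α ∆ l) ∈ G C (α ∆ l) := by
      rw [mem_G_iff]
      exact ⟨∅, C.hSZ.1, d, hd, by rw [Finset.inter_comm]; exact (bot_symmDiff _).symm⟩
    have hZZ : d ∩ (α ∆ l) ∈ ZZ C := by
      rw [hsplit]
      exact (isSubgroup_ZZ C).2 _ hzz _ hdl
    by_contra hn
    exact htol _ hmem ⟨hZZ, hn⟩
  · intro hSZ
    have h1 : d ∩ (α ∆ l) ∈ ZZ C := SZ_sub_ZZ C hSZ
    rw [hsplit] at h1
    have := (isSubgroup_ZZ C).2 _ h1 _ hdl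
    rwa [symmDiff_symmDiff_cancel_right] at this

/-! ### the big parity identity -/

lemma big_parity (s t α l : Finset Q) :
    (((s ∩ α).card + (t ∩ l).card + ((s ∩ α) ∩ (s ∩ l)).card + ((t ∩ α) ∩ (t ∩ l)).card
      + (((s ∩ α) ∆ (s ∩ l)) ∩ ((t ∩ α) ∆ (t ∩ l))).card : ℕ) : ZMod 2)
    = (((s ∆ l) ∩ ((s ∆ t) ∩ (α ∆ l))).card : ZMod 2) := by
  push_cast
  rw [card_zmod2, card_zmod2, card_zmod2, card_zmod2, card_zmod2, card_zmod2]
  rw [← Finset.sum_add_distrib, ← Finset.sum_add_distrib, ← Finset.sum_add_distrib,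
    ← Finset.sum_add_distrib]
  refine Finset.sum_congr rfl fun q _ => ?_
  simp only [ind_inter, ind_symmDiff]
  generalize ind s q = x
  generalize ind t q = y
  generalize ind α q = a
  generalize ind l q = c
  revert x y a c
  decide

/-! ### Step E : phase matching -/

lemma stepE {b : Q → ℤ} (hb : ∀ q, Odd (b q)) {s t α l z₀ : Finset Q}
    (hsl : s ∆ l ∈ ZX C) (hdSZ : (s ∆ t) ∩ (α ∆ l) ∈ C.SZ)
    (hz₀ : g b (((s ∆ t)) ∩ (α ∆ l)) ≡ 2 * ((z₀ ∩ (s ∆ t)).card : ℤ) [ZMOD 4]) :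
    (ζ : ℂ) ^ (g b (s ∆ α) - g b (t ∆ α))
      = ζ ^ (g b (s ∆ l) - g b (t ∆ l)) * ((-1 : ℂ)) ^ (((s ∆ t) ∩ z₀).card) := by
  -- abbreviations
  set P := s ∩ α with hP
  set Qq := s ∩ l with hQ
  set R := t ∩ α with hR
  set S := t ∩ l with hS
  have e1 : g b (s ∆ α) = g b s + g b α - 2 * g b P := g_symmDiff b s α
  have e2 : g b (t ∆ α) = g b t + g b α - 2 * g b R := g_symmDiff b t α
  have e3 : g b (s ∆ l) = g b s + g b l - 2 * g b Qq := g_symmDiff b s l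
  have e4 : g b (t ∆ l) = g b t + g b l - 2 * g b S := g_symmDiff b t l
  have hdec : (s ∆ t) ∩ (α ∆ l) = (P ∆ Qq) ∆ (R ∆ S) := by
    rw [inter_symmDiff_right, inter_symmDiff_left, inter_symmDiff_left]
  have e5 : g b ((P ∆ Qq) ∆ (R ∆ S)) = g b (P ∆ Qq) + g b (R ∆ S)
      - 2 * g b ((P ∆ Qq) ∩ (R ∆ S)) := g_symmDiff b _ _
  have e6 : g b (P ∆ Qq) = g b P + g b Qq - 2 * g b (P ∩ Qq) := g_symmDiff b _ _
  have e7 : g b (R ∆ S) = g b R + g b S - 2 * g b (R ∩ S) := g_symmDiff b _ _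
  -- parity facts
  have p1 : (2:ℤ) ∣ g b P - P.card := g_parity hb _
  have p2 : (2:ℤ) ∣ g b S - S.card := g_parity hb _
  have p3 : (2:ℤ) ∣ g b (P ∩ Qq) - (P ∩ Qq).card := g_parity hb _
  have p4 : (2:ℤ) ∣ g b (R ∩ S) - (R ∩ S).card := g_parity hb _
  have p5 : (2:ℤ) ∣ g b ((P ∆ Qq) ∩ (R ∆ S)) - ((P ∆ Qq) ∩ (R ∆ S)).card := g_parity hb _
  -- the big parity fact
  have heven : 2 ∣ ((s ∆ l) ∩ ((s ∆ t) ∩ (α ∆ l))).card := hsl _ hdSZ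
  have pbig : (2:ℤ) ∣ (P.card : ℤ) + S.card + (P ∩ Qq).card + (R ∩ S).card
      + ((P ∆ Qq) ∩ (R ∆ S)).card := by
    have hzz := big_parity s t α l
    rw [hP, hQ, hR, hS]
    have h0 : (((s ∆ l) ∩ ((s ∆ t) ∩ (α ∆ l))).card : ZMod 2) = 0 := (dvd2_iff _).1 heven
    rw [h0] at hzz
    have := (ZMod.natCast_eq_zero_iff _ 2).1 (by exact_mod_cast hzz)
    push_cast at this ⊢
    omega
  -- the z₀ property
  have hz₀' : (4:ℤ) ∣ 2 * ((z₀ ∩ (s ∆ t)).card : ℤ) - g b ((s ∆ t) ∩ (α ∆ l)) :=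
    Int.modEq_iff_dvd.1 hz₀
  rw [hdec] at hz₀'
  -- card comm
  have hcc : ((s ∆ t) ∩ z₀).card = (z₀ ∩ (s ∆ t)).card := by rw [Finset.inter_comm]
  -- final congruence
  have hcong : g b (s ∆ α) - g b (t ∆ α)
      ≡ (g b (s ∆ l) - g b (t ∆ l)) + 4 * (((s ∆ t) ∩ z₀).card : ℤ) [ZMOD 8] := by
    rw [Int.modEq_iff_dvd, hcc]
    rw [e1, e2, e3, e4]
    omega
  rw [ζ_zpow_congr hcong, ζ_zpow_add, ζ_zpow_four_mul_card]
/-! ### The scalar identity -/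

lemma scalar_core {b : Q → ℤ} (hb : ∀ q, Odd (b q)) (hdual : Dual C)
    (hsingle : SingleQubit C) (hinter : Inter C) (htinv : TInv C b)
    {α l s t : Finset Q} (hl : LogicalX C l) (htol : Tolerable C (α ∆ l))
    (hs : s ∈ ZX C) (ht : t ∈ ZX C) :
    (((Set.toFinite C.SX).toFinset.card : ℂ))⁻¹ *
        ∑ c ∈ (Set.toFinite C.SX).toFinset, (ζ : ℂ) ^ (g b ((s ∆ α) ∆ c) - g b ((t ∆ α) ∆ c))
      = (((Set.toFinite (E C b (α ∆ l))).toFinset.card : ℂ))⁻¹ *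
        ∑ z ∈ (Set.toFinite (E C b (α ∆ l))).toFinset,
          ((-1 : ℂ)) ^ ((s ∩ z).card + (t ∩ z).card) * (ζ : ℂ) ^ (g b (s ∆ l) - g b (t ∆ l)) := by
  classical
  set d : Finset Q := s ∆ t with hdd
  have hdZX : d ∈ ZX C := (isSubgroup_ZX C).2 s hs t ht
  obtain ⟨z₀, hz₀⟩ := E_nonempty hb hdual hinter (α ∆ l)
  -- LHS rewrite
  have hL : ∑ c ∈ (Set.toFinite C.SX).toFinset, (ζ:ℂ) ^ (g b ((s ∆ α) ∆ c) - g b ((t ∆ α) ∆ c))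
      = (ζ:ℂ) ^ (g b (s ∆ α) - g b (t ∆ α)) *
        ∑ c ∈ (Set.toFinite C.SX).toFinset, ((-1:ℂ)) ^ (((d ∩ α) ∩ c).card) := by
    rw [Finset.mul_sum]
    refine Finset.sum_congr rfl fun c hc => ?_
    have hc' : c ∈ C.SX := (Set.toFinite C.SX).mem_toFinset.1 hc
    have := stepA_term hb htinv (α := α) hs ht hc'
    rw [this]
  -- RHS rewrite : terms
  have hterm : ∀ z : Finset Q, ((-1:ℂ)) ^ ((s ∩ z).card + (t ∩ z).card)
      = ((-1:ℂ)) ^ ((d ∩ z).card) := by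
    intro z
    refine (neg_one_pow_zmod2 ?_).symm
    rw [hdd, inter_symmDiff_right, pc_symmDiff]
    push_cast; ring
  -- transport the E-sum to the subgroup K
  set K : Set (Finset Q) := Zof (Zof (G C (α ∆ l))) with hK
  have hinj : Function.Injective (fun w : Finset Q => z₀ ∆ w) := by
    intro x y hxy
    have := congrArg (fun u => z₀ ∆ u) hxy
    simpa [symmDiff_symmDiff_cancel_left] using this
  have hEf : (Set.toFinite (E C b (α ∆ l))).toFinset
      = ((Set.toFinite K).toFinset).image (fun w => z₀ ∆ w) := by
    ext z
    rw [Set.Finite.mem_toFinset, Finset.mem_image, E_eq_image hz₀]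
    constructor
    · rintro ⟨w, hw, rfl⟩
      exact ⟨w, (Set.toFinite K).mem_toFinset.2 hw, rfl⟩
    · rintro ⟨w, hw, rfl⟩
      exact ⟨w, (Set.toFinite K).mem_toFinset.1 hw, rfl⟩
  have hcardE : (Set.toFinite (E C b (α ∆ l))).toFinset.card = (Set.toFinite K).toFinset.card := by
    rw [hEf, Finset.card_image_of_injective _ hinj]
  have hsumE : ∑ z ∈ (Set.toFinite (E C b (α ∆ l))).toFinset, ((-1:ℂ)) ^ ((d ∩ z).card)
      = ((-1:ℂ)) ^ ((d ∩ z₀).card) *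
        ∑ w ∈ (Set.toFinite K).toFinset, ((-1:ℂ)) ^ ((d ∩ w).card) := by
    rw [hEf, Finset.sum_image (fun x _ y _ h => hinj h), Finset.mul_sum]
    refine Finset.sum_congr rfl fun w hw => ?_
    rw [← pow_add]
    refine neg_one_pow_zmod2 ?_
    rw [inter_symmDiff_left, pc_symmDiff]
    push_cast; ring
  -- indicator equivalence
  have hiff : (∀ c ∈ C.SX, 2 ∣ ((d ∩ α) ∩ c).card) ↔ (∀ w ∈ K, 2 ∣ (d ∩ w).card) := by
    have h1 : (∀ c ∈ C.SX, 2 ∣ ((d ∩ α) ∩ c).card) ↔ d ∩ α ∈ ZZ C := Iff.rfl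
    have h2 : (∀ w ∈ K, 2 ∣ (d ∩ w).card) ↔ d ∈ Zof K := Iff.rfl
    rw [h1, h2, hK, Zof_Zof_Zof, mem_Zof_G_iff hdual hdZX]
    exact stepD hinter hl hdZX htol
  -- nonzero cardinalities
  have hSXne : (((Set.toFinite C.SX).toFinset.card : ℂ)) ≠ 0 := by
    have h : (0:ℕ) < (Set.toFinite C.SX).toFinset.card :=
      Finset.card_pos.2 ⟨∅, (Set.toFinite C.SX).mem_toFinset.2 C.hSX.1⟩
    exact Nat.cast_ne_zero.2 (Nat.pos_iff_ne_zero.1 h)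
  have hKne : (((Set.toFinite K).toFinset.card : ℂ)) ≠ 0 := by
    have h : (0:ℕ) < (Set.toFinite K).toFinset.card :=
      Finset.card_pos.2 ⟨∅, (Set.toFinite K).mem_toFinset.2 (isSubgroup_Zof _).1⟩
    exact Nat.cast_ne_zero.2 (Nat.pos_iff_ne_zero.1 h)
  -- rewrite both sides
  have hR1 : ∑ z ∈ (Set.toFinite (E C b (α ∆ l))).toFinset,
        ((-1 : ℂ)) ^ ((s ∩ z).card + (t ∩ z).card) * (ζ : ℂ) ^ (g b (s ∆ l) - g b (t ∆ l))
      = (∑ z ∈ (Set.toFinite (E C b (α ∆ l))).toFinset, ((-1:ℂ)) ^ ((d ∩ z).card)) *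
        (ζ : ℂ) ^ (g b (s ∆ l) - g b (t ∆ l)) := by
    rw [Finset.sum_mul]
    exact Finset.sum_congr rfl fun z _ => by rw [hterm z]
  rw [hL, hR1, hsumE, hcardE, char_sum C.hSX (d ∩ α), char_sum (isSubgroup_Zof _) d]
  by_cases hind : ∀ c ∈ C.SX, 2 ∣ ((d ∩ α) ∩ c).card
  · rw [if_pos hind, if_pos (hiff.1 hind)]
    -- phase identity
    have hdSZ : d ∩ (α ∆ l) ∈ C.SZ := (stepD hinter hl hdZX htol).1 hind
    have hdZof : d ∈ Zof (G C (α ∆ l)) := (mem_Zof_G_iff hdual hdZX).2 hdSZ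
    have hzd := hz₀ d hdZof
    have hsl : s ∆ l ∈ ZX C := (isSubgroup_ZX C).2 s hs l hl.1
    have hphase := stepE (C := C) hb hsl hdSZ hzd
    rw [← hdd] at hphase
    rw [hphase]
    have hc1 : ∀ x : ℂ, (((Set.toFinite C.SX).toFinset.card : ℂ))⁻¹ *
        (x * ((Set.toFinite C.SX).toFinset.card : ℂ)) = x := by
      intro x
      rw [mul_comm x, ← mul_assoc, inv_mul_cancel₀ hSXne, one_mul]
    have hc2 : ∀ x y : ℂ, (((Set.toFinite K).toFinset.card : ℂ))⁻¹ *
        (x * ((Set.toFinite K).toFinset.card : ℂ) * y) = x * y := by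
      intro x y
      rw [mul_comm x, mul_assoc, ← mul_assoc, inv_mul_cancel₀ hKne, one_mul]
    rw [hc1, hc2]
    ring
  · rw [if_neg hind, if_neg (fun h => hind (hiff.2 h))]
    ring
/-! ### Matrix entry lemmas -/

lemma XM_mul_apply (a : Finset Q) (A : M Q) (u v : Q → ZMod 2) :
    (XM a * A) u v = A (u + ind a) v := by
  rw [Matrix.mul_apply]
  have hcond : ∀ w : Q → ZMod 2, (u = w + ind a) ↔ (w = u + ind a) := by
    intro w
    constructor
    · rintro rfl; rw [add_ind_add_ind]
    · rintro rfl; rw [add_ind_add_ind]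
  have : ∀ w : Q → ZMod 2, XM a u w * A w v
      = if w = u + ind a then A w v else 0 := by
    intro w
    rw [XM]
    by_cases h : w = u + ind a
    · rw [Matrix.of_apply, if_pos ((hcond w).2 h), if_pos h, one_mul]
    · rw [Matrix.of_apply, if_neg (fun hh => h ((hcond w).1 hh)), if_neg h, zero_mul]
  rw [Finset.sum_congr rfl (fun w _ => this w), Finset.sum_ite_eq' Finset.univ (u + ind a)]
  simp

lemma mul_XM_apply (A : M Q) (a : Finset Q) (u v : Q → ZMod 2) :
    (A * XM a) u v = A u (v + ind a) := by
  rw [Matrix.mul_apply]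
  have : ∀ w : Q → ZMod 2, A u w * XM a w v
      = if w = v + ind a then A u w else 0 := by
    intro w
    rw [XM, Matrix.of_apply]
    by_cases h : w = v + ind a
    · rw [if_pos h, if_pos h, mul_one]
    · rw [if_neg h, if_neg h, mul_zero]
  rw [Finset.sum_congr rfl (fun w _ => this w), Finset.sum_ite_eq' Finset.univ (v + ind a)]
  simp

lemma UM_eq (b : Q → ℤ) : UM b = Matrix.diagonal (fun v => (ζ : ℂ) ^ (g b (supp v))) := rfl

lemma ZM_mul_apply (a : Finset Q) (A : M Q) (u v : Q → ZMod 2) :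
    (ZM a * A) u v = ((-1 : ℂ)) ^ ((supp u ∩ a).card) * A u v := by
  rw [ZM, Matrix.diagonal_mul]

lemma mul_ZM_apply (A : M Q) (a : Finset Q) (u v : Q → ZMod 2) :
    (A * ZM a) u v = A u v * ((-1 : ℂ)) ^ ((supp v ∩ a).card) := by
  rw [ZM, Matrix.mul_diagonal]

/-- the inner transversal operator is diagonal -/
lemma w_diag (b : Q → ℤ) (l : Finset Q) :
    (UM b)ᴴ * XM l * UM b * XM l
      = Matrix.diagonal (fun x => (ζ : ℂ) ^ (g b (supp x ∆ l) - g b (supp x))) := by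
  apply Matrix.ext
  intro x y
  rw [UM_eq, Matrix.diagonal_conjTranspose, mul_XM_apply, Matrix.mul_diagonal,
    Matrix.diagonal_mul, XM, Matrix.of_apply, add_ind_add_ind]
  by_cases h : x = y
  · subst h
    rw [if_pos rfl, Matrix.diagonal_apply_eq, mul_one, Pi.star_apply, ← starRingEnd_apply,
      ζ_conj, supp_add_ind, ← ζ_zpow_add]
    congr 1
    ring
  · rw [if_neg h, Matrix.diagonal_apply_ne _ h, mul_zero, zero_mul]

lemma sandwich_diag (b : Q → ℤ) (l : Finset Q) (ρ : M Q) :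
    UM b * (((UM b)ᴴ * XM l * UM b * XM l) * ρ * ((UM b)ᴴ * XM l * UM b * XM l)ᴴ) * (UM b)ᴴ
      = Matrix.diagonal (fun x => (ζ : ℂ) ^ (g b (supp x ∆ l))) * ρ *
        (Matrix.diagonal (fun x => (ζ : ℂ) ^ (g b (supp x ∆ l))))ᴴ := by
  rw [w_diag]
  have hUD : UM b * Matrix.diagonal (fun x => (ζ : ℂ) ^ (g b (supp x ∆ l) - g b (supp x)))
      = Matrix.diagonal (fun x => (ζ : ℂ) ^ (g b (supp x ∆ l))) := by
    have hfun : (fun x : Q → ZMod 2 => (ζ:ℂ) ^ (g b (supp x)) *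
        (ζ:ℂ) ^ (g b (supp x ∆ l) - g b (supp x)))
        = fun x => (ζ:ℂ) ^ (g b (supp x ∆ l)) := by
      funext x
      rw [← ζ_zpow_add]
      congr 1
      ring
    rw [UM_eq, Matrix.diagonal_mul_diagonal, hfun]
  calc UM b * ((Matrix.diagonal (fun x => (ζ : ℂ) ^ (g b (supp x ∆ l) - g b (supp x)))) * ρ *
        (Matrix.diagonal (fun x => (ζ : ℂ) ^ (g b (supp x ∆ l) - g b (supp x))))ᴴ) * (UM b)ᴴ
      = (UM b * Matrix.diagonal (fun x => (ζ : ℂ) ^ (g b (supp x ∆ l) - g b (supp x)))) * ρ *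
        ((UM b * Matrix.diagonal (fun x => (ζ : ℂ) ^ (g b (supp x ∆ l) - g b (supp x))))ᴴ) := by
        rw [Matrix.conjTranspose_mul]
        noncomm_ring
    _ = _ := by rw [hUD]

/-! ### encoded state lemmas -/

lemma rho_shift {ρ : M Q} (hρ : Encoded C ρ) {c : Finset Q} (hc : c ∈ C.SX)
    (x y : Q → ZMod 2) : ρ (x + ind c) (y + ind c) = ρ x y := by
  have h1 := (hρ.2.1 c hc).1
  have h2 := (hρ.2.1 c hc).2
  calc ρ (x + ind c) (y + ind c) = (XM c * ρ) x (y + ind c) := (XM_mul_apply c ρ x _).symm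
    _ = ρ x (y + ind c) := by rw [h1]
    _ = (ρ * XM c) x y := (mul_XM_apply ρ c x y).symm
    _ = ρ x y := by rw [h2]

lemma rho_row_ZX {ρ : M Q} (hρ : Encoded C ρ) {x y : Q → ZMod 2} (h : ρ x y ≠ 0) :
    supp x ∈ ZX C := by
  intro f hf
  have h1 := (hρ.2.2 f hf).1
  have he : ((-1 : ℂ)) ^ ((supp x ∩ f).card) * ρ x y = ρ x y := by
    rw [← ZM_mul_apply, h1]
  by_contra hodd
  have hneg : ((-1 : ℂ)) ^ ((supp x ∩ f).card) = -1 :=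
    Odd.neg_one_pow (Nat.odd_iff.2 (by omega))
  rw [hneg] at he
  apply h
  have : (2 : ℂ) * ρ x y = 0 := by linear_combination - he
  simpa using (mul_eq_zero.1 this).resolve_left (by norm_num)

lemma rho_col_ZX {ρ : M Q} (hρ : Encoded C ρ) {x y : Q → ZMod 2} (h : ρ x y ≠ 0) :
    supp y ∈ ZX C := by
  intro f hf
  have h1 := (hρ.2.2 f hf).2
  have he : ρ x y * ((-1 : ℂ)) ^ ((supp y ∩ f).card) = ρ x y := by
    rw [← mul_ZM_apply, h1]
  by_contra hodd
  have hneg : ((-1 : ℂ)) ^ ((supp y ∩ f).card) = -1 :=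
    Odd.neg_one_pow (Nat.odd_iff.2 (by omega))
  rw [hneg] at he
  apply h
  have : (2 : ℂ) * ρ x y = 0 := by linear_combination - he
  simpa using (mul_eq_zero.1 this).resolve_left (by norm_num)

/-! ### entry formulas for the two sides -/

lemma LHS_summand_entry (b : Q → ℤ) (α c : Finset Q) (ρ : M Q) (u v : Q → ZMod 2) :
    (XM c * (UM b * (XM α * ρ * XM α) * (UM b)ᴴ) * XM c) u v
      = (ζ : ℂ) ^ (g b (supp (u + ind c))) *
          (starRingEnd ℂ) ((ζ : ℂ) ^ (g b (supp (v + ind c)))) *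
          ρ (u + ind c + ind α) (v + ind c + ind α) := by
  rw [mul_XM_apply, XM_mul_apply, UM_eq, Matrix.diagonal_conjTranspose, Matrix.mul_diagonal,
    Matrix.diagonal_mul, mul_XM_apply, XM_mul_apply, Pi.star_apply, ← starRingEnd_apply]
  ring

lemma RHS_summand_entry (b : Q → ℤ) (l z : Finset Q) (ρ : M Q) (x y : Q → ZMod 2) :
    (ZM z * (UM b * (((UM b)ᴴ * XM l * UM b * XM l) * ρ *
        ((UM b)ᴴ * XM l * UM b * XM l)ᴴ) * (UM b)ᴴ) * ZM z) x y
      = ((-1 : ℂ)) ^ ((supp x ∩ z).card) * ((-1 : ℂ)) ^ ((supp y ∩ z).card) *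
          ((ζ : ℂ) ^ (g b (supp x ∆ l)) * (starRingEnd ℂ) ((ζ : ℂ) ^ (g b (supp y ∆ l)))) *
          ρ x y := by
  rw [sandwich_diag, mul_ZM_apply, ZM_mul_apply, Matrix.diagonal_conjTranspose,
    Matrix.mul_diagonal, Matrix.diagonal_mul, Pi.star_apply, ← starRingEnd_apply]
  ring

lemma ζ_zpow_sub (a c : ℤ) : (ζ : ℂ) ^ (a - c) = ζ ^ a * ζ ^ (-c) := by
  rw [sub_eq_add_neg, ζ_zpow_add]

theorem transversal_T_propagation_not_tolerable'
    (C : CSS Q) (b : Q → ℤ) (hb : ∀ q, Odd (b q))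
    (hdual : Dual C) (hsingle : SingleQubit C) (hinter : Inter C) (htinv : TInv C b)
    (α : Finset Q) (hntol : ¬ Tolerable C α) (ρ : M Q) (hρ : Encoded C ρ) :
    (∃ l, LogicalX C l ∧ Tolerable C (α ∆ l)) ∧
    ∀ l, LogicalX C l → Tolerable C (α ∆ l) →
      (((Set.toFinite C.SX).toFinset.card : ℂ))⁻¹ •
          ∑ c ∈ (Set.toFinite C.SX).toFinset,
            XM c * (UM b * (XM α * ρ * XM α) * (UM b)ᴴ) * XM c
        = XM α *
          ((((Set.toFinite (E C b (α ∆ l))).toFinset.card : ℂ))⁻¹ •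
            ∑ z ∈ (Set.toFinite (E C b (α ∆ l))).toFinset,
              ZM z * (UM b *
                  (((UM b)ᴴ * XM l * UM b * XM l) * ρ *
                    ((UM b)ᴴ * XM l * UM b * XM l)ᴴ) *
                  (UM b)ᴴ) * ZM z) * XM α := by
  obtain ⟨l₀, hl₀⟩ := exists_logicalX hsingle
  refine ⟨⟨l₀, hl₀, tolerable_symmDiff_logical hb hdual hsingle hinter htinv hntol hl₀⟩, ?_⟩
  intro l hl htol
  apply Matrix.ext
  intro u v
  set s : Finset Q := supp (u + ind α) with hs_def
  set t : Finset Q := supp (v + ind α) with ht_def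
  set r : ℂ := ρ (u + ind α) (v + ind α) with hr_def
  have hsupp_u : supp u = s ∆ α := by
    rw [hs_def, supp_add_ind]
    exact (symmDiff_symmDiff_cancel_right _ _).symm
  have hsupp_v : supp v = t ∆ α := by
    rw [ht_def, supp_add_ind]
    exact (symmDiff_symmDiff_cancel_right _ _).symm
  have hL : ((((Set.toFinite C.SX).toFinset.card : ℂ))⁻¹ •
      ∑ c ∈ (Set.toFinite C.SX).toFinset,
        XM c * (UM b * (XM α * ρ * XM α) * (UM b)ᴴ) * XM c) u v
      = ((((Set.toFinite C.SX).toFinset.card : ℂ))⁻¹ *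
        ∑ c ∈ (Set.toFinite C.SX).toFinset,
          (ζ : ℂ) ^ (g b ((s ∆ α) ∆ c) - g b ((t ∆ α) ∆ c))) * r := by
    have hsum : ∑ c ∈ (Set.toFinite C.SX).toFinset,
        (XM c * (UM b * (XM α * ρ * XM α) * (UM b)ᴴ) * XM c) u v
        = (∑ c ∈ (Set.toFinite C.SX).toFinset,
            (ζ : ℂ) ^ (g b ((s ∆ α) ∆ c) - g b ((t ∆ α) ∆ c))) * r := by
      rw [Finset.sum_mul]
      refine Finset.sum_congr rfl fun c hc => ?_
      have hc' : c ∈ C.SX := (Set.toFinite C.SX).mem_toFinset.1 hc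
      rw [LHS_summand_entry]
      have hshift : ρ (u + ind c + ind α) (v + ind c + ind α) = r := by
        rw [add_right_comm u (ind c) (ind α), add_right_comm v (ind c) (ind α)]
        rw [rho_shift hρ hc']
      rw [hshift, supp_add_ind, supp_add_ind, hsupp_u, hsupp_v, ζ_conj, ζ_zpow_sub]
      all_goals ring
    rw [Matrix.smul_apply, Matrix.sum_apply, smul_eq_mul, hsum, ← mul_assoc]
  have hR : (XM α *
      ((((Set.toFinite (E C b (α ∆ l))).toFinset.card : ℂ))⁻¹ •
        ∑ z ∈ (Set.toFinite (E C b (α ∆ l))).toFinset,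
          ZM z * (UM b *
              (((UM b)ᴴ * XM l * UM b * XM l) * ρ *
                ((UM b)ᴴ * XM l * UM b * XM l)ᴴ) *
              (UM b)ᴴ) * ZM z) * XM α) u v
      = ((((Set.toFinite (E C b (α ∆ l))).toFinset.card : ℂ))⁻¹ *
        ∑ z ∈ (Set.toFinite (E C b (α ∆ l))).toFinset,
          ((-1 : ℂ)) ^ ((s ∩ z).card + (t ∩ z).card) *
            (ζ : ℂ) ^ (g b (s ∆ l) - g b (t ∆ l))) * r := by
    have hsum : ∑ z ∈ (Set.toFinite (E C b (α ∆ l))).toFinset,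
        (ZM z * (UM b *
            (((UM b)ᴴ * XM l * UM b * XM l) * ρ *
              ((UM b)ᴴ * XM l * UM b * XM l)ᴴ) *
            (UM b)ᴴ) * ZM z) (u + ind α) (v + ind α)
        = (∑ z ∈ (Set.toFinite (E C b (α ∆ l))).toFinset,
            ((-1 : ℂ)) ^ ((s ∩ z).card + (t ∩ z).card) *
              (ζ : ℂ) ^ (g b (s ∆ l) - g b (t ∆ l))) * r := by
      rw [Finset.sum_mul]
      refine Finset.sum_congr rfl fun z hz => ?_
      rw [RHS_summand_entry, ← hs_def, ← ht_def, ← hr_def, ζ_conj, ζ_zpow_sub, pow_add]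
      all_goals ring
    rw [mul_XM_apply, XM_mul_apply, Matrix.smul_apply, Matrix.sum_apply, smul_eq_mul, hsum,
      ← mul_assoc]
  rw [hL, hR]
  by_cases hr : r = 0
  · rw [hr, mul_zero, mul_zero]
  · have hsZX : s ∈ ZX C := by
      have := rho_row_ZX hρ (show ρ (u + ind α) (v + ind α) ≠ 0 from hr)
      rwa [← hs_def] at this
    have htZX : t ∈ ZX C := by
      have := rho_col_ZX hρ (show ρ (u + ind α) (v + ind α) ≠ 0 from hr)
      rwa [← ht_def] at this
    exact congrArg (· * r)
      (scalar_core hb hdual hsingle hinter htinv hl htol hsZX htZX)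

/-- Theorem 1 (non-tolerable case): there is a logical `X` operator `l` with `α ∆ l`
tolerable, and for any such `l` the propagated error additionally includes the encoded
gate `w = U† X_l U X_l` applied before `U`. -/
theorem transversal_T_propagation_not_tolerable
    (C : CSS Q) (b : Q → ℤ) (hb : ∀ q, Odd (b q))
    (hdual : Dual C) (hsingle : SingleQubit C) (hinter : Inter C) (htinv : TInv C b)
    (α : Finset Q) (hntol : ¬ Tolerable C α) (ρ : M Q) (hρ : Encoded C ρ) :
    (∃ l, LogicalX C l ∧ Tolerable C (α ∆ l)) ∧
    ∀ l, LogicalX C l → Tolerable C (α ∆ l) →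
      (((Set.toFinite C.SX).toFinset.card : ℂ))⁻¹ •
          ∑ c ∈ (Set.toFinite C.SX).toFinset,
            XM c * (UM b * (XM α * ρ * XM α) * (UM b)ᴴ) * XM c
        = XM α *
          ((((Set.toFinite (E C b (α ∆ l))).toFinset.card : ℂ))⁻¹ •
            ∑ z ∈ (Set.toFinite (E C b (α ∆ l))).toFinset,
              ZM z * (UM b *
                  (((UM b)ᴴ * XM l * UM b * XM l) * ρ *
                    ((UM b)ᴴ * XM l * UM b * XM l)ᴴ) *
                  (UM b)ᴴ) * ZM z) * XM α :=
  transversal_T_propagation_not_tolerable' C b hb hdual hsingle hinter htinv α hntol ρ hρ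

end CC
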